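/- Let u be inner with u(0) = 0. For any inner functions α and γ, the subspace conj(z)·conj(K_α) ⊕ γ·u·H^2 is a D_u-invariant closed subspace of K_u^⊥. -/

import Mathlib

open MeasureTheory Complex AddCircle

noncomputable section

namespace Paper

/-- The period `2π`. -/
abbrev T : ℝ := 2 * Real.pi

instance : Fact (0 < T) := ⟨by positivity⟩

/-- Normalized Lebesgue (Haar) measure on the circle. -/
abbrev μ : Measure (AddCircle T) := haarAddCircle

/-- The space `L²(𝕋, dm)`. -/
abbrev L2 : Type := Lp ℂ 2 μ

lemma memLp_mul {u : AddCircle T → ℂ} (hm : AEStronglyMeasurable u μ)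
    (hb : ∀ᵐ x ∂μ, ‖u x‖ ≤ 1) (f : L2) :
    MemLp (fun x => u x * (f : AddCircle T → ℂ) x) 2 μ := by
  refine (Lp.memLp f).of_le (hm.mul (Lp.aestronglyMeasurable f)) ?_
  filter_upwards [hb] with x hx
  calc ‖u x * (f : AddCircle T → ℂ) x‖ = ‖u x‖ * ‖(f : AddCircle T → ℂ) x‖ := norm_mul _ _
    _ ≤ 1 * ‖(f : AddCircle T → ℂ) x‖ := by gcongr
    _ = ‖(f : AddCircle T → ℂ) x‖ := one_mul _

/-- Multiplication by a measurable function bounded by `1`, as a bounded operator on `L²`. -/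
def mulCLM (u : AddCircle T → ℂ) (hm : AEStronglyMeasurable u μ)
    (hb : ∀ᵐ x ∂μ, ‖u x‖ ≤ 1) : L2 →L[ℂ] L2 :=
  LinearMap.mkContinuous
    { toFun := fun f => (memLp_mul hm hb f).toLp _
      map_add' := fun f g => by
        show MemLp.toLp _ (memLp_mul hm hb (f + g)) = _
        have h : (fun x => u x * ((f + g : L2) : AddCircle T → ℂ) x)
            =ᵐ[μ] (fun x => u x * (f : AddCircle T → ℂ) x)
              + (fun x => u x * (g : AddCircle T → ℂ) x) := by
          filter_upwards [Lp.coeFn_add f g] with x hx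
          simp only [Pi.add_apply, hx, mul_add]
        rw [MemLp.toLp_congr (memLp_mul hm hb (f + g))
          ((memLp_mul hm hb f).add (memLp_mul hm hb g)) h, MemLp.toLp_add]
      map_smul' := fun c f => by
        have h : (fun x => u x * ((c • f : L2) : AddCircle T → ℂ) x)
            =ᵐ[μ] c • (fun x => u x * (f : AddCircle T → ℂ) x) := by
          filter_upwards [Lp.coeFn_smul c f] with x hx
          simp only [Pi.smul_apply, hx, smul_eq_mul]
          ring
        simp only [RingHom.id_apply]
        rw [MemLp.toLp_congr (memLp_mul hm hb (c • f))
          ((memLp_mul hm hb f).const_smul c) h, MemLp.toLp_const_smul] }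
    1
    (fun f => by
      simp only [LinearMap.coe_mk, AddHom.coe_mk, one_mul]
      rw [Lp.norm_toLp]
      have h1 : eLpNorm (fun x => u x * (f : AddCircle T → ℂ) x) 2 μ
          ≤ eLpNorm (f : AddCircle T → ℂ) 2 μ := by
        refine eLpNorm_mono_ae ?_
        filter_upwards [hb] with x hx
        calc ‖u x * (f : AddCircle T → ℂ) x‖
            = ‖u x‖ * ‖(f : AddCircle T → ℂ) x‖ := norm_mul _ _
          _ ≤ 1 * ‖(f : AddCircle T → ℂ) x‖ := by gcongr
          _ = ‖(f : AddCircle T → ℂ) x‖ := one_mul _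
      calc (eLpNorm (fun x => u x * (f : AddCircle T → ℂ) x) 2 μ).toReal
          ≤ (eLpNorm (f : AddCircle T → ℂ) 2 μ).toReal :=
            ENNReal.toReal_mono (Lp.eLpNorm_ne_top f) h1
        _ = ‖f‖ := (Lp.norm_def f).symm)

lemma memLp_conj (f : L2) :
    MemLp (fun x => (starRingEnd ℂ) ((f : AddCircle T → ℂ) x)) 2 μ := by
  refine (Lp.memLp f).of_le ?_ ?_
  · exact Complex.continuous_conj.comp_aestronglyMeasurable (Lp.aestronglyMeasurable f)
  · filter_upwards with x
    simp

/-- Complex conjugation on `L²`. -/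
def conjL2 (f : L2) : L2 := (memLp_conj f).toLp _

/-- The independent variable `z = e^{iθ}` as a function on the circle. -/
def zfun : AddCircle T → ℂ := fun x => fourier 1 x

lemma zfun_meas : AEStronglyMeasurable zfun μ :=
  ((map_continuous (fourier (T := T) 1)).aestronglyMeasurable)

lemma zfun_norm : ∀ᵐ x ∂μ, ‖zfun x‖ ≤ 1 := by
  filter_upwards with x
  simp [zfun, Circle.norm_coe]

/-- Multiplication by `z` (the bilateral shift `M` on `L²`). -/
def Mz : L2 →L[ℂ] L2 := mulCLM zfun zfun_meas zfun_norm

/-- Multiplication by `conj z`. -/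
def Mzbar : L2 →L[ℂ] L2 :=
  mulCLM (fun x => (starRingEnd ℂ) (zfun x))
    (Complex.continuous_conj.comp_aestronglyMeasurable zfun_meas)
    (by filter_upwards with x; simp [zfun, Circle.norm_coe])

/-- The Hardy space `H² = {f ∈ L² : f̂(n) = 0 for all n < 0}`. -/
def H2 : Submodule ℂ L2 where
  carrier := {f | ∀ n : ℤ, n < 0 → fourierBasis.repr f n = 0}
  add_mem' := by
    intro f g hf hg n hn
    simp [map_add, hf n hn, hg n hn]
  zero_mem' := by intro n hn; simp
  smul_mem' := by
    intro c f hf n hn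
    simp [_root_.map_smul, hf n hn]

lemma continuous_coeff (n : ℤ) :
    Continuous fun f : L2 => fourierBasis.repr f n := by
  rw [Metric.continuous_iff]
  intro f ε hε
  refine ⟨ε, hε, fun g hg => ?_⟩
  have h1 : fourierBasis.repr g n - fourierBasis.repr f n = fourierBasis.repr (g - f) n := by
    simp [map_sub]
  have h2 : ‖fourierBasis.repr (g - f) n‖ ≤ ‖fourierBasis.repr (g - f)‖ :=
    lp.norm_apply_le_norm (by norm_num) _ n
  have h3 : ‖fourierBasis.repr (g - f)‖ = ‖g - f‖ :=
    fourierBasis.repr.norm_map _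
  calc dist (fourierBasis.repr g n) (fourierBasis.repr f n)
      = ‖fourierBasis.repr (g - f) n‖ := by rw [dist_eq_norm, h1]
    _ ≤ ‖g - f‖ := by rw [← h3]; exact h2
    _ = dist g f := (dist_eq_norm g f).symm
    _ < ε := hg

lemma H2_isClosed : IsClosed (H2 : Set L2) := by
  have : (H2 : Set L2) =
      ⋂ n ∈ {m : ℤ | m < 0}, {f : L2 | fourierBasis.repr f n = 0} := by
    ext f
    simp only [Set.mem_iInter, Set.mem_setOf_eq]
    rfl
  rw [this]
  exact isClosed_biInter fun n _ => isClosed_eq (continuous_coeff n) continuous_const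

instance : CompleteSpace H2 := H2_isClosed.completeSpace_coe

/-- The Riesz projection `P⁺` of `L²` onto `H²`. -/
def Pp : L2 →L[ℂ] L2 := H2.subtypeL ∘L Submodule.orthogonalProjectionOnto H2

/-- The projection `P⁻ = I − P⁺` of `L²` onto `conj(H²₀)`. -/
def Pm : L2 →L[ℂ] L2 := ContinuousLinearMap.id ℂ L2 - Pp

/-- `conj(H²₀) = {f ∈ L² : f̂(n) = 0 for all n ≥ 0}`, the orthogonal complement of `H²`. -/
def Hm : Submodule ℂ L2 where
  carrier := {f | ∀ n : ℤ, 0 ≤ n → fourierBasis.repr f n = 0}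
  add_mem' := by
    intro f g hf hg n hn
    simp [map_add, hf n hn, hg n hn]
  zero_mem' := by intro n hn; simp
  smul_mem' := by
    intro c f hf n hn
    simp [_root_.map_smul, hf n hn]

/-- The constant function `1` as an element of `L²`. -/
def oneL2 : L2 := (memLp_const (1 : ℂ)).toLp _

/-- An inner function: a bounded measurable unimodular function on the circle whose
negative Fourier coefficients vanish. -/
structure InnerData where
  u : AddCircle T → ℂ
  meas : AEStronglyMeasurable u μ
  unim : ∀ᵐ x ∂μ, ‖u x‖ = 1
  anal : ∀ n : ℤ, n < 0 → fourierCoeff u n = 0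

namespace InnerData

variable (U : InnerData)

lemma bd : ∀ᵐ x ∂μ, ‖U.u x‖ ≤ 1 := by
  filter_upwards [U.unim] with x hx
  rw [hx]

/-- Multiplication by `u`: the operator `M_u` on `L²`. -/
def M : L2 →L[ℂ] L2 := mulCLM U.u U.meas U.bd

/-- Multiplication by `conj u`: the operator `M_{conj u}` on `L²`. -/
def Mc : L2 →L[ℂ] L2 :=
  mulCLM (fun x => (starRingEnd ℂ) (U.u x))
    (Complex.continuous_conj.comp_aestronglyMeasurable U.meas)
    (by filter_upwards [U.bd] with x hx; simpa using hx)

/-- `u` as an element of `L²`. -/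
def toL2 : L2 :=
  (memLp_top_of_bound U.meas 1 U.bd |>.mono_exponent le_top).toLp _

/-- The value `u(0)` of (the analytic extension of) `u` at the origin, i.e. the mean of `u`. -/
def a0 : ℂ := fourierCoeff U.u 0

/-- The subspace `uH²`. -/
def uH2 : Submodule ℂ L2 := Submodule.map (U.M : L2 →ₗ[ℂ] L2) H2

/-- The model space `K_u = H² ∩ (uH²)ᗮ`. -/
def Ku : Submodule ℂ L2 := H2 ⊓ (U.uH2)ᗮ

lemma Ku_isClosed : IsClosed (U.Ku : Set L2) := by
  have : (U.Ku : Set L2) = (H2 : Set L2) ∩ ((U.uH2)ᗮ : Set L2) := rfl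
  rw [this]
  exact H2_isClosed.inter (U.uH2).isClosed_orthogonal

instance : CompleteSpace U.Ku := U.Ku_isClosed.completeSpace_coe

/-- `K_u^⊥`, the orthogonal complement of the model space in `L²`. -/
def KP : Submodule ℂ L2 := (U.Ku)ᗮ

instance : CompleteSpace U.KP := (U.Ku).isClosed_orthogonal.completeSpace_coe

/-- The orthogonal projection `P_u : L² → K_u` (viewed as an operator on `L²`). -/
def Pu : L2 →L[ℂ] L2 := (U.Ku).subtypeL ∘L Submodule.orthogonalProjectionOnto U.Ku

/-- The dual of the compressed shift: `D_u = (I − P_u) M_z |_{K_u^⊥}`. -/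
def Du : U.KP →L[ℂ] U.KP :=
  Submodule.orthogonalProjectionOnto U.KP ∘L Mz ∘L (U.KP).subtypeL

/-- The conjugation `C_u f = u · conj(z f)` on `L²`. -/
def C (f : L2) : L2 := U.M (conjL2 (Mz f))

/-- The reproducing kernel of `K_u` at `0`: `k₀ᵘ = 1 − conj(u(0))·u`. -/
def k0 : L2 := oneL2 - (starRingEnd ℂ) U.a0 • U.toL2

/-- The similarity `V_u = P⁻ + (conj u/conj u(0)) P⁺` of the paper. -/
def V : L2 →L[ℂ] L2 := Pm + ((starRingEnd ℂ) U.a0)⁻¹ • (U.Mc ∘L Pp)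

/-- The inverse similarity `V_u⁻¹ = P⁻ + conj(u(0)) u P⁺`. -/
def Vinv : L2 →L[ℂ] L2 := Pm + (starRingEnd ℂ) U.a0 • (U.M ∘L Pp)

end InnerData

lemma Mz_mem_H2 {f : L2} (hf : f ∈ H2) : Mz f ∈ H2 := by
  intro n hn
  rw [fourierBasis_repr]
  have hcoe : (Mz f : AddCircle T → ℂ) =ᵐ[μ] fun x => zfun x * (f : AddCircle T → ℂ) x :=
    MemLp.coeFn_toLp (memLp_mul zfun_meas zfun_norm f)
  have h1 : fourierCoeff (Mz f : AddCircle T → ℂ) n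
      = fourierCoeff (f : AddCircle T → ℂ) (n - 1) := by
    unfold fourierCoeff
    rw [integral_congr_ae (by filter_upwards [hcoe] with x hx; rw [hx])]
    refine integral_congr_ae ?_
    filter_upwards with x
    have : fourier (-n) x * zfun x = fourier (-(n - 1)) x := by
      unfold zfun
      rw [show (-(n - 1) : ℤ) = -n + 1 by ring, fourier_add]
    simp only [smul_eq_mul]
    calc fourier (-n) x * (zfun x * (f : AddCircle T → ℂ) x)
        = (fourier (-n) x * zfun x) * (f : AddCircle T → ℂ) x := by ring
      _ = fourier (-(n - 1)) x * (f : AddCircle T → ℂ) x := by rw [this]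
  rw [h1]
  have := hf (n - 1) (by omega)
  rwa [fourierBasis_repr] at this

/-- The unilateral shift `S` on `H²`. -/
def Shift : H2 →L[ℂ] H2 :=
  (Mz ∘L H2.subtypeL).codRestrict H2 (fun x => Mz_mem_H2 x.2)

section Aux

open scoped ComplexConjugate

local notation "⟪" x ", " y "⟫" => @inner ℂ L2 _ x y

lemma mulCLM_coeFn (u : AddCircle T → ℂ) (hm : AEStronglyMeasurable u μ)
    (hb : ∀ᵐ x ∂μ, ‖u x‖ ≤ 1) (f : L2) :
    (mulCLM u hm hb f : AddCircle T → ℂ) =ᵐ[μ] fun x => u x * (f : AddCircle T → ℂ) x :=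
  MemLp.coeFn_toLp (memLp_mul hm hb f)

lemma conjL2_coeFn (f : L2) :
    (conjL2 f : AddCircle T → ℂ) =ᵐ[μ] fun x => conj ((f : AddCircle T → ℂ) x) :=
  MemLp.coeFn_toLp _

lemma oneL2_coeFn : (oneL2 : AddCircle T → ℂ) =ᵐ[μ] fun _ => (1 : ℂ) :=
  MemLp.coeFn_toLp _

lemma fourierCoeff_congr {f g : AddCircle T → ℂ} (h : f =ᵐ[μ] g) (n : ℤ) :
    fourierCoeff f n = fourierCoeff g n := by
  unfold fourierCoeff
  exact integral_congr_ae (by filter_upwards [h] with x hx; rw [hx])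

lemma parseval (f g : L2) :
    ⟪f, g⟫ = ∑' n : ℤ, conj (fourierCoeff (f : AddCircle T → ℂ) n)
      * fourierCoeff (g : AddCircle T → ℂ) n := by
  rw [← fourierBasis.repr.inner_map_map f g, lp.inner_eq_tsum]
  congr 1; ext n
  rw [RCLike.inner_apply, fourierBasis_repr, fourierBasis_repr]
  ring

lemma fourierCoeff_zfun_mul (g : AddCircle T → ℂ) (n : ℤ) :
    fourierCoeff (fun x => zfun x * g x) n = fourierCoeff g (n - 1) := by
  unfold fourierCoeff
  refine integral_congr_ae ?_
  filter_upwards with x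
  have h : fourier (-n) x * zfun x = fourier (-(n - 1)) x := by
    unfold zfun
    rw [show (-(n - 1) : ℤ) = -n + 1 by ring, fourier_add]
  simp only [smul_eq_mul]
  calc fourier (-n) x * (zfun x * g x) = (fourier (-n) x * zfun x) * g x := by ring
    _ = fourier (-(n - 1)) x * g x := by rw [h]

lemma fourierCoeff_zbar_mul (g : AddCircle T → ℂ) (n : ℤ) :
    fourierCoeff (fun x => conj (zfun x) * g x) n = fourierCoeff g (n + 1) := by
  unfold fourierCoeff
  refine integral_congr_ae ?_
  filter_upwards with x
  have h : fourier (-n) x * conj (zfun x) = fourier (-(n + 1)) x := by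
    unfold zfun
    rw [show conj (fourier 1 x) = fourier (-1) x from (fourier_neg (n := 1)).symm,
      show (-(n + 1) : ℤ) = -n + -1 by ring, fourier_add]
  simp only [smul_eq_mul]
  calc fourier (-n) x * (conj (zfun x) * g x) = (fourier (-n) x * conj (zfun x)) * g x := by ring
    _ = fourier (-(n + 1)) x * g x := by rw [h]

lemma fourierCoeff_conj (g : AddCircle T → ℂ) (n : ℤ) :
    fourierCoeff (fun x => conj (g x)) n = conj (fourierCoeff g (-n)) := by
  unfold fourierCoeff
  rw [← integral_conj]
  refine integral_congr_ae ?_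
  filter_upwards with x
  simp only [smul_eq_mul, map_mul, neg_neg]
  rw [← fourier_neg]

lemma oneL2_eq : oneL2 = (fourierBasis (T := T)) 0 := by
  refine Lp.ext ?_
  have h1 : ((fourierBasis (T := T)) 0 : AddCircle T → ℂ) =ᵐ[μ] fourier 0 := by
    rw [coe_fourierBasis]; exact coeFn_fourierLp 2 0
  filter_upwards [oneL2_coeFn, h1] with x hx hy
  rw [hx, hy, fourier_zero]

lemma fourierCoeff_oneL2 (n : ℤ) :
    fourierCoeff ((oneL2 : L2) : AddCircle T → ℂ) n = if n = 0 then 1 else 0 := by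
  rw [← fourierBasis_repr, oneL2_eq, fourierBasis.repr_self, lp.single_apply]
  by_cases h : n = 0 <;> simp [h]

lemma memLp_bdd {u : AddCircle T → ℂ} (hm : AEStronglyMeasurable u μ)
    (hb : ∀ᵐ x ∂μ, ‖u x‖ ≤ 1) : MemLp u 2 μ :=
  (memLp_top_of_bound hm 1 hb).mono_exponent le_top

lemma fourierCoeff_fourier_mul (k : ℤ) (g : AddCircle T → ℂ) (n : ℤ) :
    fourierCoeff (fun x => fourier k x * g x) n = fourierCoeff g (n - k) := by
  unfold fourierCoeff
  refine integral_congr_ae ?_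
  filter_upwards with x
  simp only [smul_eq_mul]
  rw [show fourier (-n) x * (fourier k x * g x) = (fourier (-n) x * fourier k x) * g x by ring,
    ← fourier_add, show (-n + k : ℤ) = -(n - k) by ring]

lemma fourierCoeff_mul (u : AddCircle T → ℂ) (hm : AEStronglyMeasurable u μ)
    (hb : ∀ᵐ x ∂μ, ‖u x‖ ≤ 1) (f : L2) (n : ℤ) :
    fourierCoeff (fun x => u x * (f : AddCircle T → ℂ) x) n
      = ∑' m : ℤ, fourierCoeff u (n - m) * fourierCoeff (f : AddCircle T → ℂ) m := by
  set w0 : AddCircle T → ℂ := fun x => conj (fourier (-n) x * u x) with hw0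
  have hw0m : AEStronglyMeasurable w0 μ :=
    Complex.continuous_conj.comp_aestronglyMeasurable
      (((map_continuous (fourier (T := T) (-n))).aestronglyMeasurable).mul hm)
  have hw0b : ∀ᵐ x ∂μ, ‖w0 x‖ ≤ 1 := by
    filter_upwards [hb] with x hx
    simpa [w0, Circle.norm_coe] using hx
  set w : L2 := (memLp_bdd hw0m hw0b).toLp w0 with hw
  have hwcoe : (w : AddCircle T → ℂ) =ᵐ[μ] w0 := MemLp.coeFn_toLp _
  have h1 : ⟪w, f⟫ = fourierCoeff (fun x => u x * (f : AddCircle T → ℂ) x) n := by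
    rw [MeasureTheory.L2.inner_def]
    unfold fourierCoeff
    refine integral_congr_ae ?_
    filter_upwards [hwcoe] with x hx
    rw [RCLike.inner_apply, hx]
    simp only [w0, smul_eq_mul, RingHomCompTriple.comp_apply, RingHom.id_apply, map_mul,
      Complex.conj_conj]
    ring
  have h2 : ∀ m : ℤ, fourierCoeff (w : AddCircle T → ℂ) m = conj (fourierCoeff u (n - m)) := by
    intro m
    rw [fourierCoeff_congr hwcoe m, hw0]
    rw [fourierCoeff_conj (fun x => fourier (-n) x * u x) m,
      fourierCoeff_fourier_mul (-n) u (-m), show (-m - -n : ℤ) = n - m by ring]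
  rw [← h1, parseval]
  exact tsum_congr fun m => by rw [h2 m, Complex.conj_conj]

lemma mulCLM_fourierCoeff (u : AddCircle T → ℂ) (hm : AEStronglyMeasurable u μ)
    (hb : ∀ᵐ x ∂μ, ‖u x‖ ≤ 1) (f : L2) (n : ℤ) :
    fourierCoeff ((mulCLM u hm hb f : L2) : AddCircle T → ℂ) n
      = ∑' m : ℤ, fourierCoeff u (n - m) * fourierCoeff (f : AddCircle T → ℂ) m :=
  (fourierCoeff_congr (mulCLM_coeFn u hm hb f) n).trans (fourierCoeff_mul u hm hb f n)

lemma Mz_fourierCoeff (f : L2) (n : ℤ) :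
    fourierCoeff ((Mz f : L2) : AddCircle T → ℂ) n
      = fourierCoeff (f : AddCircle T → ℂ) (n - 1) :=
  (fourierCoeff_congr (mulCLM_coeFn _ _ _ f) n).trans (fourierCoeff_zfun_mul _ n)

lemma Mzbar_fourierCoeff (f : L2) (n : ℤ) :
    fourierCoeff ((Mzbar f : L2) : AddCircle T → ℂ) n
      = fourierCoeff (f : AddCircle T → ℂ) (n + 1) :=
  (fourierCoeff_congr (mulCLM_coeFn _ _ _ f) n).trans (fourierCoeff_zbar_mul _ n)

lemma conjL2_fourierCoeff (f : L2) (n : ℤ) :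
    fourierCoeff ((conjL2 f : L2) : AddCircle T → ℂ) n
      = conj (fourierCoeff (f : AddCircle T → ℂ) (-n)) :=
  (fourierCoeff_congr (conjL2_coeFn f) n).trans (fourierCoeff_conj _ n)

lemma InnerData.M_fourierCoeff (V : InnerData) (f : L2) (n : ℤ) :
    fourierCoeff ((V.M f : L2) : AddCircle T → ℂ) n
      = ∑' m : ℤ, fourierCoeff V.u (n - m) * fourierCoeff (f : AddCircle T → ℂ) m :=
  mulCLM_fourierCoeff V.u V.meas V.bd f n

lemma InnerData.M_mem_H2 (V : InnerData) {f : L2} (hf : f ∈ H2) : V.M f ∈ H2 := by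
  intro n hn
  rw [fourierBasis_repr, V.M_fourierCoeff]
  rw [show (0 : ℂ) = ∑' _ : ℤ, (0 : ℂ) from tsum_zero.symm]
  refine tsum_congr fun m => ?_
  by_cases hm : m < 0
  · have := hf m hm
    rw [fourierBasis_repr] at this
    rw [this, mul_zero]
  · rw [V.anal (n - m) (by omega), zero_mul]

lemma Mz_coeFn (f : L2) :
    ((Mz f : L2) : AddCircle T → ℂ) =ᵐ[μ] fun x => zfun x * (f : AddCircle T → ℂ) x :=
  mulCLM_coeFn zfun zfun_meas zfun_norm f

lemma Mzbar_coeFn (f : L2) :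
    ((Mzbar f : L2) : AddCircle T → ℂ)
      =ᵐ[μ] fun x => conj (zfun x) * (f : AddCircle T → ℂ) x :=
  mulCLM_coeFn _ (Complex.continuous_conj.comp_aestronglyMeasurable zfun_meas)
    (by filter_upwards with x; simp [zfun, Circle.norm_coe]) f

lemma InnerData.M_coeFn (V : InnerData) (f : L2) :
    ((V.M f : L2) : AddCircle T → ℂ) =ᵐ[μ] fun x => V.u x * (f : AddCircle T → ℂ) x :=
  mulCLM_coeFn V.u V.meas V.bd f

lemma conjL2_add (f g : L2) : conjL2 (f + g) = conjL2 f + conjL2 g := by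
  refine Lp.ext ?_
  filter_upwards [conjL2_coeFn (f + g), Lp.coeFn_add f g,
    Lp.coeFn_add (conjL2 f) (conjL2 g), conjL2_coeFn f, conjL2_coeFn g] with x h1 h2 h3 h4 h5
  rw [h1, h2, h3]
  simp [h4, h5]

lemma conjL2_smul (c : ℂ) (f : L2) : conjL2 (c • f) = conj c • conjL2 f := by
  refine Lp.ext ?_
  filter_upwards [conjL2_coeFn (c • f), Lp.coeFn_smul c f,
    Lp.coeFn_smul (conj c) (conjL2 f), conjL2_coeFn f] with x h1 h2 h3 h4
  rw [h1, h2, h3]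
  simp [h4]

lemma conjL2_zero : conjL2 (0 : L2) = 0 := by
  refine Lp.ext ?_
  filter_upwards [conjL2_coeFn (0 : L2), Lp.coeFn_zero ℂ 2 μ] with x h1 h2
  rw [h1, h2]
  simp [h2]

lemma conjL2_sub (f g : L2) : conjL2 (f - g) = conjL2 f - conjL2 g := by
  refine Lp.ext ?_
  filter_upwards [conjL2_coeFn (f - g), Lp.coeFn_sub f g,
    Lp.coeFn_sub (conjL2 f) (conjL2 g), conjL2_coeFn f, conjL2_coeFn g] with x h1 h2 h3 h4 h5
  rw [h1, h2, h3]
  simp [h4, h5]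

lemma norm_conjL2 (f : L2) : ‖conjL2 f‖ = ‖f‖ := by
  rw [Lp.norm_def, Lp.norm_def]
  congr 1
  refine eLpNorm_congr_norm_ae ?_
  filter_upwards [conjL2_coeFn f] with x hx
  rw [hx]
  simp

lemma norm_mulCLM_unim {u : AddCircle T → ℂ} (hm : AEStronglyMeasurable u μ)
    (hu : ∀ᵐ x ∂μ, ‖u x‖ = 1) (hb : ∀ᵐ x ∂μ, ‖u x‖ ≤ 1) (f : L2) :
    ‖mulCLM u hm hb f‖ = ‖f‖ := by
  rw [Lp.norm_def, Lp.norm_def]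
  congr 1
  refine eLpNorm_congr_norm_ae ?_
  filter_upwards [mulCLM_coeFn u hm hb f, hu] with x hx hx1
  rw [hx]
  simp [norm_mul, hx1]

lemma norm_Mz (f : L2) : ‖Mz f‖ = ‖f‖ :=
  norm_mulCLM_unim zfun_meas (by filter_upwards with x; simp [zfun, Circle.norm_coe]
    ) zfun_norm f

lemma mulCLM_comm {u v : AddCircle T → ℂ} (hmu : AEStronglyMeasurable u μ)
    (hbu : ∀ᵐ x ∂μ, ‖u x‖ ≤ 1) (hmv : AEStronglyMeasurable v μ)
    (hbv : ∀ᵐ x ∂μ, ‖v x‖ ≤ 1) (f : L2) :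
    mulCLM u hmu hbu (mulCLM v hmv hbv f) = mulCLM v hmv hbv (mulCLM u hmu hbu f) := by
  refine Lp.ext ?_
  filter_upwards [mulCLM_coeFn u hmu hbu (mulCLM v hmv hbv f),
    mulCLM_coeFn v hmv hbv f, mulCLM_coeFn v hmv hbv (mulCLM u hmu hbu f),
    mulCLM_coeFn u hmu hbu f] with x h1 h2 h3 h4
  rw [h1, h2, h3, h4]
  ring

lemma inner_Mzbar (f g : L2) : ⟪f, Mzbar g⟫ = ⟪Mz f, g⟫ := by
  rw [MeasureTheory.L2.inner_def, MeasureTheory.L2.inner_def]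
  refine integral_congr_ae ?_
  filter_upwards [Mzbar_coeFn g, Mz_coeFn f] with x h1 h2
  rw [RCLike.inner_apply, RCLike.inner_apply, h1, h2]
  simp only [map_mul]
  ring

lemma inner_Hm_H2 {f g : L2} (hf : f ∈ Hm) (hg : g ∈ H2) : ⟪f, g⟫ = 0 := by
  rw [parseval]
  rw [show (0 : ℂ) = ∑' _ : ℤ, (0 : ℂ) from tsum_zero.symm]
  refine tsum_congr fun n => ?_
  by_cases hn : 0 ≤ n
  · have := hf n hn
    rw [fourierBasis_repr] at this
    rw [this]
    simp
  · have := hg n (by omega)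
    rw [fourierBasis_repr] at this
    rw [this, mul_zero]

lemma isClosed_sup_of_orthogonal {A B : Submodule ℂ L2} (hA : IsClosed (A : Set L2))
    (hB : IsClosed (B : Set L2)) (hAB : ∀ a ∈ A, ∀ b ∈ B, ⟪a, b⟫ = 0) :
    IsClosed ((A ⊔ B : Submodule ℂ L2) : Set L2) := by
  haveI : CompleteSpace A := hA.completeSpace_coe
  refine IsSeqClosed.isClosed ?_
  intro s x hs hx
  have hdecomp : ∀ n : ℕ, ∃ a ∈ A, ∃ b ∈ B, a + b = s n := fun n =>
    Submodule.mem_sup.mp (hs n)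
  choose a ha b hb hab using hdecomp
  set P : L2 →L[ℂ] L2 := A.subtypeL ∘L Submodule.orthogonalProjectionOnto A with hP
  have hPA : ∀ n, P (s n) = a n := by
    intro n
    have hb' : b n ∈ Aᗮ := (Submodule.mem_orthogonal A (b n)).mpr
      (fun v hv => hAB v hv (b n) (hb n))
    have h1 : (Submodule.orthogonalProjectionOnto A (a n) : L2) = a n :=
      Submodule.starProjection_eq_self_iff.mpr (ha n)
    have h2 : Submodule.orthogonalProjectionOnto A (b n) = 0 :=
      Submodule.orthogonalProjectionOnto_apply_of_mem_orthogonal hb'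
    rw [← hab n]
    show (Submodule.orthogonalProjectionOnto A (a n + b n) : L2) = a n
    rw [map_add, h2, add_zero, h1]
  have hconv : Filter.Tendsto (fun n => a n) Filter.atTop (nhds (P x)) := by
    have h := (P.continuous.tendsto x).comp hx
    refine h.congr fun n => hPA n
  have hPx : P x ∈ A := by
    show (Submodule.orthogonalProjectionOnto A x : L2) ∈ A
    exact (Submodule.orthogonalProjectionOnto A x).2
  have hbconv : Filter.Tendsto (fun n => s n - a n) Filter.atTop (nhds (x - P x)) :=
    hx.sub hconv
  have hbmem : ∀ n, s n - a n ∈ B := by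
    intro n
    rw [← hab n]
    simpa using hb n
  have hxa : x - P x ∈ B := hB.mem_of_tendsto hbconv (Filter.Eventually.of_forall hbmem)
  exact Submodule.mem_sup.mpr ⟨P x, hPx, x - P x, hxa, by abel⟩

lemma isometry_conjMz : Isometry (fun k : L2 => conjL2 (Mz k)) := by
  refine Isometry.of_dist_eq fun f g => ?_
  rw [dist_eq_norm, dist_eq_norm]
  have h : conjL2 (Mz f) - conjL2 (Mz g) = conjL2 (Mz (f - g)) := by
    rw [map_sub, conjL2_sub]
  rw [h, norm_conjL2, norm_Mz]

lemma InnerData.norm_M (V : InnerData) (f : L2) : ‖V.M f‖ = ‖f‖ :=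
  norm_mulCLM_unim V.meas V.unim V.bd f

lemma oneL2_mem_H2 : oneL2 ∈ H2 := by
  intro n hn
  rw [fourierBasis_repr, fourierCoeff_oneL2, if_neg (by omega)]

lemma inner_oneL2_right (f : L2) :
    ⟪f, oneL2⟫ = conj (fourierCoeff (f : AddCircle T → ℂ) 0) := by
  rw [parseval]
  rw [tsum_eq_single 0 (fun n hn => by rw [fourierCoeff_oneL2, if_neg hn, mul_zero])]
  rw [fourierCoeff_oneL2, if_pos rfl, mul_one]

lemma InnerData.coeff0_M (V : InnerData) (h0 : V.a0 = 0) {w : L2} (hw : w ∈ H2) :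
    fourierCoeff ((V.M w : L2) : AddCircle T → ℂ) 0 = 0 := by
  rw [V.M_fourierCoeff]
  rw [show (0 : ℂ) = ∑' _ : ℤ, (0 : ℂ) from tsum_zero.symm]
  refine tsum_congr fun m => ?_
  rcases lt_trichotomy m 0 with hm | hm | hm
  · have := hw m hm
    rw [fourierBasis_repr] at this
    rw [this, mul_zero]
  · subst hm
    rw [show (0 - 0 : ℤ) = 0 by ring]
    have : fourierCoeff V.u 0 = 0 := h0
    rw [this, zero_mul]
  · rw [V.anal (0 - m) (by omega), zero_mul]

lemma InnerData.coeff0_M_Mz (V : InnerData) {w : L2} (hw : w ∈ H2) :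
    fourierCoeff ((V.M (Mz w) : L2) : AddCircle T → ℂ) 0 = 0 := by
  rw [V.M_fourierCoeff]
  rw [show (0 : ℂ) = ∑' _ : ℤ, (0 : ℂ) from tsum_zero.symm]
  refine tsum_congr fun m => ?_
  by_cases hm : 0 < m
  · rw [V.anal (0 - m) (by omega), zero_mul]
  · have h1 : fourierCoeff ((Mz w : L2) : AddCircle T → ℂ) m
        = fourierCoeff (w : AddCircle T → ℂ) (m - 1) := Mz_fourierCoeff w m
    have h2 := hw (m - 1) (by omega)
    rw [fourierBasis_repr] at h2
    rw [h1, h2, mul_zero]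

lemma InnerData.one_mem_Ku (U : InnerData) (h0 : U.a0 = 0) : oneL2 ∈ U.Ku := by
  refine Submodule.mem_inf.mpr ⟨oneL2_mem_H2, ?_⟩
  rw [Submodule.mem_orthogonal]
  rintro y hy
  obtain ⟨w, hw, rfl⟩ := hy
  show ⟪U.M w, oneL2⟫ = 0
  rw [inner_oneL2_right, U.coeff0_M h0 hw, map_zero]

lemma M_Mz_comm (V : InnerData) (f : L2) : Mz (V.M f) = V.M (Mz f) :=
  mulCLM_comm zfun_meas zfun_norm V.meas V.bd f

/-- The subspace `conj(z) conj(K_α)`. -/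
def S1 (A : InnerData) : Submodule ℂ L2 where
  carrier := (fun k => conjL2 (Mz k)) '' (A.Ku : Set L2)
  add_mem' := by
    rintro _ _ ⟨k, hk, rfl⟩ ⟨k', hk', rfl⟩
    exact ⟨k + k', A.Ku.add_mem hk hk', by
      show conjL2 (Mz (k + k')) = conjL2 (Mz k) + conjL2 (Mz k')
      rw [map_add, conjL2_add]⟩
  zero_mem' := ⟨0, A.Ku.zero_mem, by
    show conjL2 (Mz 0) = 0
    rw [map_zero, conjL2_zero]⟩
  smul_mem' := by
    rintro c _ ⟨k, hk, rfl⟩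
    refine ⟨conj c • k, A.Ku.smul_mem _ hk, ?_⟩
    show conjL2 (Mz (conj c • k)) = c • conjL2 (Mz k)
    rw [Mz.map_smul, conjL2_smul, Complex.conj_conj]

/-- The subspace `γ u H²`. -/
def S2 (G U : InnerData) : Submodule ℂ L2 :=
  Submodule.map ((G.M ∘L U.M : L2 →L[ℂ] L2) : L2 →ₗ[ℂ] L2) H2

lemma S1_le_Hm (A : InnerData) : S1 A ≤ Hm := by
  rintro _ ⟨k, hk, rfl⟩ n hn
  rw [fourierBasis_repr, conjL2_fourierCoeff, Mz_fourierCoeff]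
  have hkH2 : k ∈ H2 := hk.1
  have := hkH2 (-n - 1) (by omega)
  rw [fourierBasis_repr] at this
  rw [this, map_zero]

lemma S1_isClosed (A : InnerData) : IsClosed ((S1 A : Submodule ℂ L2) : Set L2) :=
  isometry_conjMz.isClosedEmbedding.isClosedMap _ A.Ku_isClosed

lemma S2_le_H2 (G U : InnerData) : S2 G U ≤ H2 := by
  rintro _ ⟨h, hh, rfl⟩
  exact G.M_mem_H2 (U.M_mem_H2 hh)

lemma S2_le_uH2 (G U : InnerData) : S2 G U ≤ U.uH2 := by
  rintro _ ⟨h, hh, rfl⟩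
  show G.M (U.M h) ∈ U.uH2
  have hcomm : G.M (U.M h) = U.M (G.M h) := mulCLM_comm G.meas G.bd U.meas U.bd h
  rw [hcomm]
  exact ⟨G.M h, G.M_mem_H2 hh, rfl⟩

lemma S2_isClosed (G U : InnerData) : IsClosed ((S2 G U : Submodule ℂ L2) : Set L2) := by
  have hiso : Isometry (fun h : L2 => G.M (U.M h)) := by
    refine Isometry.of_dist_eq fun f g => ?_
    rw [dist_eq_norm, dist_eq_norm, show G.M (U.M f) - G.M (U.M g) = G.M (U.M (f - g)) by
      rw [map_sub, map_sub], G.norm_M, U.norm_M]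
  exact hiso.isClosedEmbedding.isClosedMap _ H2_isClosed

lemma S1_S2_orthogonal (A G U : InnerData) :
    ∀ a ∈ S1 A, ∀ b ∈ S2 G U, ⟪a, b⟫ = 0 := fun a ha b hb =>
  inner_Hm_H2 (S1_le_Hm A ha) (S2_le_H2 G U hb)

lemma sup_le_KP (U : InnerData) (A G : InnerData) : S1 A ⊔ S2 G U ≤ U.KP := by
  refine sup_le ?_ ?_
  · intro x hx
    rw [InnerData.KP, Submodule.mem_orthogonal]
    intro y hy
    rw [inner_eq_zero_symm]
    exact inner_Hm_H2 (S1_le_Hm A hx) hy.1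
  · intro x hx
    rw [InnerData.KP, Submodule.mem_orthogonal]
    intro y hy
    rw [inner_eq_zero_symm]
    exact hy.2 x (S2_le_uH2 G U hx)

lemma coeff_sub_smul_one (k : L2) (c : ℂ) (m : ℤ) :
    fourierCoeff (((k - c • oneL2 : L2)) : AddCircle T → ℂ) m
      = fourierCoeff (k : AddCircle T → ℂ) m
        - c * fourierCoeff ((oneL2 : L2) : AddCircle T → ℂ) m := by
  rw [← fourierBasis_repr, ← fourierBasis_repr, ← fourierBasis_repr, map_sub, _root_.map_smul]
  rfl

lemma k1_mem_Ku (A : InnerData) {k : L2} (hk : k ∈ A.Ku) :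
    Mzbar (k - fourierCoeff (k : AddCircle T → ℂ) 0 • oneL2) ∈ A.Ku := by
  set c := fourierCoeff (k : AddCircle T → ℂ) 0 with hc
  refine Submodule.mem_inf.mpr ⟨?_, ?_⟩
  · intro n hn
    rw [fourierBasis_repr, Mzbar_fourierCoeff, coeff_sub_smul_one, fourierCoeff_oneL2]
    rcases eq_or_lt_of_le (show n + 1 ≤ 0 by omega) with h1 | h1
    · rw [if_pos h1, mul_one, show (n + 1 : ℤ) = 0 from h1, ← hc, sub_self]
    · have := hk.1 (n + 1) h1
      rw [fourierBasis_repr] at this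
      rw [this, if_neg (by omega), mul_zero, sub_zero]
  · rw [Submodule.mem_orthogonal]
    rintro _ ⟨w, hw, rfl⟩
    show ⟪A.M w, Mzbar (k - c • oneL2)⟫ = 0
    rw [inner_Mzbar, M_Mz_comm, inner_sub_right, inner_smul_right]
    have h1 : ⟪A.M (Mz w), k⟫ = 0 := by
      have hmem : A.M (Mz w) ∈ A.uH2 := ⟨Mz w, Mz_mem_H2 hw, rfl⟩
      exact (Submodule.mem_orthogonal _ _).mp hk.2 _ hmem
    have h2 : ⟪A.M (Mz w), oneL2⟫ = 0 := by
      rw [inner_oneL2_right, A.coeff0_M_Mz hw, map_zero]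
    rw [h1, h2, mul_zero, sub_zero]

lemma Mz_conjMz_eq (k : L2) :
    Mz (conjL2 (Mz k))
      = conj (fourierCoeff (k : AddCircle T → ℂ) 0) • oneL2
        + conjL2 (Mz (Mzbar (k - fourierCoeff (k : AddCircle T → ℂ) 0 • oneL2))) := by
  set c := fourierCoeff (k : AddCircle T → ℂ) 0 with hc
  set g : L2 := k - c • oneL2 with hg
  refine Lp.ext ?_
  filter_upwards [Mz_coeFn (conjL2 (Mz k)), conjL2_coeFn (Mz k), Mz_coeFn k,
    Lp.coeFn_add (conj c • oneL2) (conjL2 (Mz (Mzbar g))), Lp.coeFn_smul (conj c) oneL2,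
    oneL2_coeFn, conjL2_coeFn (Mz (Mzbar g)), Mz_coeFn (Mzbar g), Mzbar_coeFn g,
    Lp.coeFn_sub k (c • oneL2), Lp.coeFn_smul c oneL2] with x h1 h2 h3 h4 h5 h6 h7 h8 h9 h10 h11
  have hz : zfun x * conj (zfun x) = 1 := by
    have hn : ‖zfun x‖ = 1 := by simp [zfun, Circle.norm_coe]
    calc zfun x * conj (zfun x) = (Complex.normSq (zfun x) : ℂ) := Complex.mul_conj _
      _ = ((‖zfun x‖ ^ 2 : ℝ) : ℂ) := by rw [Complex.normSq_eq_norm_sq]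
      _ = 1 := by rw [hn]; norm_num
  rw [h1, h2, h3, h4, Pi.add_apply, h5, Pi.smul_apply, h6, h7, h8, h9, h10, Pi.sub_apply,
    h11, Pi.smul_apply, h6]
  simp only [map_mul, map_sub, Complex.conj_conj, smul_eq_mul, mul_one]
  linear_combination conj c * hz

end Aux

/-- If `u(0) = 0` then for any inner `α`, `γ` the subspace
`conj(z)conj(K_α) ⊕ γ u H²` is a `D_u`-invariant closed subspace of `K_u^⊥`. -/
theorem invariant_direct_sum (U : InnerData) (h0 : U.a0 = 0) (A G : InnerData) :
    ∃ Ssub : Submodule ℂ L2,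
      ((Ssub : Set L2)
          = {x : L2 | ∃ k ∈ A.Ku, ∃ h ∈ H2, x = conjL2 (Mz k) + G.M (U.M h)}) ∧
      IsClosed (Ssub : Set L2) ∧ Ssub ≤ U.KP ∧
      (∀ f : L2, ∀ hf : f ∈ U.KP, f ∈ Ssub → ((U.Du ⟨f, hf⟩ : U.KP) : L2) ∈ Ssub) := by
  refine ⟨S1 A ⊔ S2 G U, ?_, ?_, sup_le_KP U A G, ?_⟩
  · ext x
    simp only [SetLike.mem_coe, Submodule.mem_sup, Set.mem_setOf_eq]
    constructor
    · rintro ⟨y, ⟨k, hk, rfl⟩, z, ⟨h, hh, rfl⟩, rfl⟩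
      exact ⟨k, hk, h, hh, rfl⟩
    · rintro ⟨k, hk, h, hh, rfl⟩
      exact ⟨conjL2 (Mz k), ⟨k, hk, rfl⟩, G.M (U.M h), ⟨h, hh, rfl⟩, rfl⟩
  · exact isClosed_sup_of_orthogonal (S1_isClosed A) (S2_isClosed G U) (S1_S2_orthogonal A G U)
  · intro f hf hfS
    obtain ⟨y, ⟨k, hk, rfl⟩, z, ⟨h, hh, rfl⟩, hyz⟩ := Submodule.mem_sup.mp hfS
    set c := fourierCoeff (k : AddCircle T → ℂ) 0 with hc
    set k1 : L2 := Mzbar (k - c • oneL2) with hk1def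
    have hk1 : k1 ∈ A.Ku := k1_mem_Ku A hk
    set rest : L2 := conjL2 (Mz k1) + G.M (U.M (Mz h)) with hrest
    have hrest_mem : rest ∈ S1 A ⊔ S2 G U :=
      Submodule.mem_sup.mpr ⟨_, ⟨k1, hk1, rfl⟩, _, ⟨Mz h, Mz_mem_H2 hh, rfl⟩, rfl⟩
    have hMzf : Mz f = (starRingEnd ℂ) c • oneL2 + rest := by
      rw [← hyz, map_add, Mz_conjMz_eq k, ← hc, ← hk1def]
      have h2 : Mz (G.M (U.M h)) = G.M (U.M (Mz h)) := by
        rw [M_Mz_comm G (U.M h), M_Mz_comm U h]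
      rw [hrest]
      show _ + Mz (G.M (U.M h)) = _
      rw [h2, add_assoc]
    have h01 : Submodule.orthogonalProjectionOnto U.KP ((starRingEnd ℂ) c • oneL2) = 0 := by
      refine Submodule.orthogonalProjectionOnto_apply_of_mem_orthogonal ?_
      have h1 : (starRingEnd ℂ) c • oneL2 ∈ U.Ku := U.Ku.smul_mem _ (U.one_mem_Ku h0)
      exact U.Ku.le_orthogonal_orthogonal h1
    have h02 : ((Submodule.orthogonalProjectionOnto U.KP rest : U.KP) : L2) = rest :=
      Submodule.starProjection_eq_self_iff.mpr (sup_le_KP U A G hrest_mem)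
    have hDu : ((U.Du ⟨f, hf⟩ : U.KP) : L2)
        = ((Submodule.orthogonalProjectionOnto U.KP (Mz f) : U.KP) : L2) := rfl
    rw [hDu, hMzf, map_add, h01, zero_add, h02]
    exact hrest_mem

end Paper
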